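/- Let E be a Hausdorff locally convex space over ℝ and let Ẽ be its completion. Then the intersection of all Mackey-complete subspaces G with E ⊆ G ⊆ Ẽ (each carrying the topology induced from Ẽ) is itself Mackey-complete; in particular, there is a smallest Mackey-complete subspace of Ẽ containing E (the Mackey completion Ê^M of E). -/

import Mathlib

open Filter Topology Set Bornology Pointwise Uniformity

/-- A sequence in a locally convex space is *Mackey-Cauchy* if there are a bounded
absolutely convex set `B` and a double sequence of nonnegative reals `c` tending to `0`
such that `x n - x m ∈ c n m • B` for all `n, m`. -/
def MackeyCauchy (E : Type*) [AddCommGroup E] [Module ℝ E] [TopologicalSpace E]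
    (x : ℕ → E) : Prop :=
  ∃ (B : Set E) (c : ℕ → ℕ → ℝ),
    IsVonNBounded ℝ B ∧ Convex ℝ B ∧ Balanced ℝ B ∧
    (∀ n m, 0 ≤ c n m) ∧
    Tendsto (fun p : ℕ × ℕ => c p.1 p.2) atTop (𝓝 (0 : ℝ)) ∧
    ∀ n m, x n - x m ∈ c n m • B

/-- A locally convex space is *Mackey-complete* if every Mackey-Cauchy sequence converges. -/
def MackeyComplete (E : Type*) [AddCommGroup E] [Module ℝ E] [TopologicalSpace E] : Prop :=
  ∀ x : ℕ → E, MackeyCauchy E x → ∃ l : E, Tendsto x atTop (𝓝 l)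

/-- A locally convex space is *k-quasi-complete* if the closed absolutely convex hull of
every compact set is compact. -/
def KQuasiComplete (E : Type*) [AddCommGroup E] [Module ℝ E] [TopologicalSpace E] : Prop :=
  ∀ K : Set E, IsCompact K → IsCompact (closure (convexHull ℝ (balancedHull ℝ K)))

theorem MackeyCauchy.map {F G : Type*} [AddCommGroup F] [Module ℝ F] [TopologicalSpace F]
    [AddCommGroup G] [Module ℝ G] [TopologicalSpace G]
    {x : ℕ → F} (h : MackeyCauchy F x) (f : F →L[ℝ] G) :
    MackeyCauchy G (fun n => f (x n)) := by
  obtain ⟨B, c, hB, hconv, hbal, hc0, hcto, hmem⟩ := h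
  refine ⟨f '' B, c, hB.image f, hconv.linear_image f.toLinearMap, ?_, hc0, hcto, ?_⟩
  · intro a ha y hy
    obtain ⟨z, hz, rfl⟩ := hy
    obtain ⟨b, hb, rfl⟩ := hz
    exact ⟨a • b, hbal a ha ⟨b, hb, rfl⟩, by simp⟩
  · intro n m
    obtain ⟨b, hb, hb'⟩ := hmem n m
    exact ⟨f b, Set.mem_image_of_mem f hb, by
      show c n m • f b = f (x n) - f (x m)
      rw [← map_smul, show c n m • b = x n - x m from hb', map_sub]⟩

theorem MackeyCauchy.cauchySeq {F : Type*} [AddCommGroup F] [Module ℝ F] [UniformSpace F]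
    [IsUniformAddGroup F] {x : ℕ → F} (h : MackeyCauchy F x) : CauchySeq x := by
  obtain ⟨B, c, hB, -, -, hc0, hcto, hmem⟩ := h
  have hb : (𝓤 F).HasBasis (fun V : Set F => V ∈ 𝓝 (0 : F))
      (fun V => (fun p : F × F => p.2 - p.1) ⁻¹' V) := by
    rw [uniformity_eq_comap_nhds_zero F]
    exact (𝓝 (0 : F)).basis_sets.comap _
  rw [hb.cauchySeq_iff]
  intro V hV
  obtain ⟨r, hr, hrV⟩ := (hB hV).exists_pos
  have hev : ∀ᶠ p : ℕ × ℕ in atTop, c p.1 p.2 < r⁻¹ :=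
    hcto (Iio_mem_nhds (by positivity))
  obtain ⟨N, hN⟩ := eventually_atTop.1 hev
  refine ⟨max N.1 N.2, fun m hm n hn => ?_⟩
  have hcnm : c n m < r⁻¹ := hN (n, m)
    ⟨le_trans (le_max_left _ _) hn, le_trans (le_max_right _ _) hm⟩
  obtain ⟨b, hb', hb''⟩ := hmem n m
  have hb2 : c n m • b = x n - x m := hb''
  simp only [Set.mem_preimage]
  rcases eq_or_lt_of_le (hc0 n m) with h0 | h0
  · have : x n - x m = 0 := by rw [← hb2, ← h0, zero_smul]
    rw [this]; exact mem_of_mem_nhds hV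
  · have hinv : r ≤ ‖(c n m)⁻¹‖ := by
      rw [Real.norm_eq_abs, abs_of_pos (by positivity)]
      exact (le_inv_comm₀ hr h0).mpr hcnm.le
    obtain ⟨v, hv, hv'⟩ := hrV _ hinv hb'
    have hv2 : (c n m)⁻¹ • v = b := hv'
    rw [← hb2, ← hv2, smul_smul, mul_inv_cancel₀ h0.ne', one_smul]
    exact hv

theorem mackeyComplete_sInf {F : Type*} [AddCommGroup F] [Module ℝ F] [UniformSpace F]
    [IsUniformAddGroup F] [CompleteSpace F] [T2Space F]
    (𝒮 : Set (Submodule ℝ F)) (h𝒮 : ∀ G ∈ 𝒮, MackeyComplete G) :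
    MackeyComplete ↥(sInf 𝒮) := by
  intro x hx
  have hxc : MackeyCauchy F (fun n => (sInf 𝒮).subtypeL (x n)) := hx.map (sInf 𝒮).subtypeL
  have hcs : CauchySeq (fun n => ((x n : ↥(sInf 𝒮)) : F)) := hxc.cauchySeq
  obtain ⟨l, hl⟩ := cauchySeq_tendsto_of_complete hcs
  have hlS : l ∈ sInf 𝒮 := by
    refine Submodule.mem_sInf.2 fun G hG => ?_
    have hle : sInf 𝒮 ≤ G := sInf_le hG
    let f : (sInf 𝒮 : Submodule ℝ F) →L[ℝ] G :=
      ⟨Submodule.inclusion hle, continuous_subtype_val.subtype_mk _⟩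
    obtain ⟨lG, hlG⟩ := h𝒮 G hG (fun n => f (x n)) (hx.map f)
    have h2 : Tendsto (fun n => ((f (x n) : G) : F)) atTop (𝓝 (lG : F)) :=
      (continuous_subtype_val.tendsto _).comp hlG
    have heq : (fun n => ((f (x n) : G) : F)) = fun n => ((x n : ↥(sInf 𝒮)) : F) := rfl
    rw [heq] at h2
    have hu : l = (lG : F) := tendsto_nhds_unique hl h2
    rw [hu]
    exact lG.2
  refine ⟨⟨l, hlS⟩, tendsto_subtype_rng.2 ?_⟩
  exact hl

/-- For a Hausdorff locally convex space `E` over `ℝ`, the intersection of all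
Mackey-complete subspaces of the completion `Ẽ` of `E` containing `E` is itself Mackey-complete;
i.e. it is the least element of the family of such subspaces (the Mackey completion of `E`). -/
theorem mackeyCompletion_isLeast
    (E : Type*) [AddCommGroup E] [Module ℝ E] [UniformSpace E] [IsUniformAddGroup E]
    [ContinuousSMul ℝ E] [LocallyConvexSpace ℝ E] [T2Space E]
    [UniformContinuousConstSMul ℝ E] :
    IsLeast {G : Submodule ℝ (UniformSpace.Completion E) |
        Set.range ((↑) : E → UniformSpace.Completion E) ⊆ (G : Set (UniformSpace.Completion E)) ∧
        MackeyComplete G}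
      (sInf {G : Submodule ℝ (UniformSpace.Completion E) |
        Set.range ((↑) : E → UniformSpace.Completion E) ⊆ (G : Set (UniformSpace.Completion E)) ∧
        MackeyComplete G}) := by
  constructor
  · refine ⟨?_, ?_⟩
    · intro y hy
      simp only [SetLike.mem_coe, Submodule.mem_sInf]
      exact fun G hG => hG.1 hy
    · exact mackeyComplete_sInf _ fun G hG => hG.2
  · exact fun G hG => sInf_le hG
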